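/- In the statistical model y_t = M_t alpha_* + w_t with V_t = sum_{k=1}^t M_k^T M_k + lambda*I, suppose the self-normalized bound ||sum_{k=1}^t M_k^T w_k||^2_{V_t^{-1}} <= 2*sigma^2 * log((1/delta) * det(V_t)^{1/2}/det(lambda*I)^{1/2}) holds, that ||M_t|| <= M for all t, and that the persistence of excitation condition (1/t) sum_{k=1}^t M_k^T M_k >= mu*I holds for all t >= T_0. Then the projected regularized least-squares estimator hat_alpha_t = Pi_C[V_t^{-1} sum_{k=1}^t M_k^T y_k] (with alpha_* in the convex set C) satisfies, for all t >= T_0: ||hat_alpha_t - alpha_*|| <= (sigma/sqrt(lambda + mu*t)) * sqrt(3*p*log((1/delta)*(1 + t*M^2/lambda))) + (lambda/(lambda + mu*t))*||alpha_*||. -/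

import Mathlib

local notation "⟪" x ", " y "⟫" => @inner ℝ _ _ x y

lemma det_bounds_aux {p : ℕ} (T : EuclideanSpace ℝ (Fin p) →ₗ[ℝ] EuclideanSpace ℝ (Fin p))
    (hT : T.IsSymmetric) (a b : ℝ) (ha : 0 ≤ a)
    (hlow : ∀ v, a * ‖v‖ ^ 2 ≤ ⟪v, T v⟫) (hup : ∀ v, ⟪v, T v⟫ ≤ b * ‖v‖ ^ 2) :
    a ^ p ≤ LinearMap.det T ∧ LinearMap.det T ≤ b ^ p := by
  have hn : Module.finrank ℝ (EuclideanSpace ℝ (Fin p)) = p := finrank_euclideanSpace_fin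
  set B := hT.eigenvectorBasis hn with hB
  set μ := hT.eigenvalues hn with hμ
  have hnorm : ∀ i, ‖B i‖ = 1 := fun i => B.orthonormal.1 i
  have heig : ∀ i, μ i = ⟪B i, T (B i)⟫ := by
    intro i
    rw [hT.apply_eigenvectorBasis hn i]
    rw [real_inner_smul_right, real_inner_self_eq_norm_sq, hnorm i]
    norm_num
    rfl
  have hbd : ∀ i, a ≤ μ i ∧ μ i ≤ b := by
    intro i
    have h1 := hlow (B i)
    have h2 := hup (B i)
    rw [hnorm i] at h1 h2
    constructor
    · calc a = a * 1 ^ 2 := by ring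
        _ ≤ ⟪B i, T (B i)⟫ := h1
        _ = μ i := (heig i).symm
    · calc μ i = ⟪B i, T (B i)⟫ := heig i
        _ ≤ b * 1 ^ 2 := h2
        _ = b := by ring
  have hdiag : LinearMap.toMatrix B.toBasis B.toBasis T = Matrix.diagonal μ := by
    ext i j
    rw [LinearMap.toMatrix_apply]
    have hTj : T (B.toBasis j) = μ j • B.toBasis j := by
      rw [OrthonormalBasis.coe_toBasis]
      exact hT.apply_eigenvectorBasis hn j
    rw [hTj, map_smul, Module.Basis.repr_self]
    simp only [Finsupp.smul_single, smul_eq_mul, mul_one, Finsupp.single_apply,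
      Matrix.diagonal_apply]
    split_ifs with h1 h2 h3
    · rw [h2]
    · exact absurd h1.symm h2
    · exact absurd h3.symm h1
    · rfl
  have hdet : LinearMap.det T = ∏ i, μ i := by
    rw [← LinearMap.det_toMatrix B.toBasis, hdiag, Matrix.det_diagonal]
  rw [hdet]
  constructor
  · calc a ^ p = ∏ _i : Fin p, a := by simp
      _ ≤ ∏ i, μ i := Finset.prod_le_prod (fun i _ => ha) (fun i _ => (hbd i).1)
  · calc (∏ i, μ i) ≤ ∏ _i : Fin p, b :=
        Finset.prod_le_prod (fun i _ => le_trans ha (hbd i).1) (fun i _ => (hbd i).2)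
      _ = b ^ p := by simp

set_option maxHeartbeats 1000000 in
theorem stmt19 (n p T0 : ℕ) (hT0 : 1 ≤ T0) (lamda sigma M mu delta : ℝ)
    (hlam : 0 < lamda) (hsig : 0 < sigma) (hmu : 0 < mu)
    (hdel : 0 < delta) (hdel1 : delta < 1) (hMnn : 0 ≤ M)
    (Mk : ℕ → (EuclideanSpace ℝ (Fin p) →L[ℝ] EuclideanSpace ℝ (Fin n)))
    (hM : ∀ t, ‖Mk t‖ ≤ M)
    (w : ℕ → EuclideanSpace ℝ (Fin n)) (αstar : EuclideanSpace ℝ (Fin p))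
    (C : Set (EuclideanSpace ℝ (Fin p))) (hC : Convex ℝ C) (hstarC : αstar ∈ C)
    (projC : EuclideanSpace ℝ (Fin p) → EuclideanSpace ℝ (Fin p))
    (hpC : ∀ z, projC z ∈ C)
    (hpne : ∀ z, ∀ c ∈ C, ‖projC z - c‖ ≤ ‖z - c‖)
    (V Vinv : ℕ → (EuclideanSpace ℝ (Fin p) →L[ℝ] EuclideanSpace ℝ (Fin p)))
    (hV : ∀ t, V t =
      lamda • (1 : EuclideanSpace ℝ (Fin p) →L[ℝ] EuclideanSpace ℝ (Fin p)) +
        ∑ k ∈ Finset.Icc 1 t, (ContinuousLinearMap.adjoint (Mk k)).comp (Mk k))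
    (hVinv : ∀ t, (V t).comp (Vinv t) = 1 ∧ (Vinv t).comp (V t) = 1)
    -- persistence of excitation: (1/t) ∑_{k=1}^t Mkᵀ Mk ⪰ mu I for t ≥ T0
    (hPE : ∀ t, T0 ≤ t → ∀ v : EuclideanSpace ℝ (Fin p),
      mu * t * ‖v‖ ^ 2 ≤
        ⟪v, (∑ k ∈ Finset.Icc 1 t, (ContinuousLinearMap.adjoint (Mk k)).comp (Mk k)) v⟫)
    -- the self-normalized martingale bound
    (hself : ∀ t : ℕ, 1 ≤ t →
      ⟪∑ k ∈ Finset.Icc 1 t, (ContinuousLinearMap.adjoint (Mk k)) (w k),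
          (Vinv t) (∑ k ∈ Finset.Icc 1 t, (ContinuousLinearMap.adjoint (Mk k)) (w k))⟫ ≤
        2 * sigma ^ 2 * Real.log ((1 / delta) *
          Real.sqrt (LinearMap.det (V t).toLinearMap) / Real.sqrt (lamda ^ p)))
    (hatα : ℕ → EuclideanSpace ℝ (Fin p))
    (hhat : ∀ t, hatα t = projC ((Vinv t)
      (∑ k ∈ Finset.Icc 1 t, (ContinuousLinearMap.adjoint (Mk k)) ((Mk k) αstar + w k)))) :
    ∀ t : ℕ, T0 ≤ t →
      ‖hatα t - αstar‖ ≤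
        sigma / Real.sqrt (lamda + mu * t) *
            Real.sqrt (3 * p * Real.log ((1 / delta) * (1 + t * M ^ 2 / lamda))) +
          lamda / (lamda + mu * t) * ‖αstar‖ := by
  intro t ht
  have ht1 : 1 ≤ t := le_trans hT0 ht
  have htR : (1 : ℝ) ≤ (t : ℝ) := by exact_mod_cast ht1
  rcases Nat.eq_zero_or_pos p with rfl | hp
  · -- p = 0 : everything is trivial
    have h0 : hatα t - αstar = (0 : EuclideanSpace ℝ (Fin 0)) := Subsingleton.elim _ _
    have h0' : αstar = (0 : EuclideanSpace ℝ (Fin 0)) := Subsingleton.elim _ _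
    rw [h0, h0']
    simp
  -- abbreviations
  set c := lamda + mu * (t : ℝ) with hcdef
  have hc : 0 < c := by nlinarith
  set S := ∑ k ∈ Finset.Icc 1 t, (ContinuousLinearMap.adjoint (Mk k)) (w k) with hS
  set Sop := ∑ k ∈ Finset.Icc 1 t, (ContinuousLinearMap.adjoint (Mk k)).comp (Mk k) with hSop
  have hVapp : ∀ v : EuclideanSpace ℝ (Fin p), V t v = lamda • v + Sop v := by
    intro v
    rw [hV t, ContinuousLinearMap.add_apply, ContinuousLinearMap.smul_apply,
      ContinuousLinearMap.one_apply]
  have hquad : ∀ v : EuclideanSpace ℝ (Fin p),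
      ⟪v, V t v⟫ = lamda * ‖v‖ ^ 2 + ⟪v, Sop v⟫ := by
    intro v
    rw [hVapp v, inner_add_right, real_inner_smul_right, real_inner_self_eq_norm_sq]
  have hlowq : ∀ v : EuclideanSpace ℝ (Fin p), c * ‖v‖ ^ 2 ≤ ⟪v, V t v⟫ := by
    intro v
    have h1 := hPE t ht v
    rw [hquad v]
    rw [← hSop] at h1
    nlinarith [h1]
  have hupq : ∀ v : EuclideanSpace ℝ (Fin p),
      ⟪v, V t v⟫ ≤ (lamda + (t : ℝ) * M ^ 2) * ‖v‖ ^ 2 := by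
    intro v
    rw [hquad v]
    have hSopb : ⟪v, Sop v⟫ ≤ (t : ℝ) * M ^ 2 * ‖v‖ ^ 2 := by
      rw [hSop, ContinuousLinearMap.sum_apply, inner_sum]
      calc (∑ k ∈ Finset.Icc 1 t, ⟪v, ((ContinuousLinearMap.adjoint (Mk k)).comp (Mk k)) v⟫)
          = ∑ k ∈ Finset.Icc 1 t, ‖(Mk k) v‖ ^ 2 := by
            refine Finset.sum_congr rfl fun k _ => ?_
            rw [ContinuousLinearMap.comp_apply, ContinuousLinearMap.adjoint_inner_right,
              real_inner_self_eq_norm_sq]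
        _ ≤ ∑ _k ∈ Finset.Icc 1 t, M ^ 2 * ‖v‖ ^ 2 := by
            refine Finset.sum_le_sum fun k _ => ?_
            have h1 : ‖(Mk k) v‖ ≤ M * ‖v‖ :=
              le_trans ((Mk k).le_opNorm v)
                (mul_le_mul_of_nonneg_right (hM k) (norm_nonneg v))
            nlinarith [norm_nonneg ((Mk k) v), norm_nonneg v]
        _ = (t : ℝ) * M ^ 2 * ‖v‖ ^ 2 := by
            rw [Finset.sum_const, Nat.card_Icc]
            simp only [Nat.add_sub_cancel, nsmul_eq_mul]
            push_cast
            ring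
    linarith
  have hsymm : ((V t).toLinearMap).IsSymmetric := by
    intro x y
    show ⟪V t x, y⟫ = ⟪x, V t y⟫
    rw [hVapp x, hVapp y, inner_add_left, inner_add_right, real_inner_smul_left,
      real_inner_smul_right]
    congr 1
    rw [hSop, ContinuousLinearMap.sum_apply, ContinuousLinearMap.sum_apply, sum_inner, inner_sum]
    refine Finset.sum_congr rfl fun k _ => ?_
    rw [ContinuousLinearMap.comp_apply, ContinuousLinearMap.comp_apply,
      ContinuousLinearMap.adjoint_inner_left, ContinuousLinearMap.adjoint_inner_right]
  have hVVinv : ∀ x : EuclideanSpace ℝ (Fin p), V t (Vinv t x) = x := by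
    intro x
    have h1 := (hVinv t).1
    calc V t (Vinv t x) = ((V t).comp (Vinv t)) x := rfl
      _ = x := by rw [h1]; rfl
  have hVinvV : ∀ x : EuclideanSpace ℝ (Fin p), Vinv t (V t x) = x := by
    intro x
    have h1 := (hVinv t).2
    calc Vinv t (V t x) = ((Vinv t).comp (V t)) x := rfl
      _ = x := by rw [h1]; rfl
  have hinv_norm : ∀ x : EuclideanSpace ℝ (Fin p), ‖Vinv t x‖ ≤ ‖x‖ / c := by
    intro x
    have h1 : c * ‖Vinv t x‖ ^ 2 ≤ ⟪Vinv t x, x⟫ := by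
      have h2 := hlowq (Vinv t x)
      rwa [hVVinv x] at h2
    have h2 : ⟪Vinv t x, x⟫ ≤ ‖Vinv t x‖ * ‖x‖ := real_inner_le_norm _ _
    by_cases hu : ‖Vinv t x‖ = 0
    · rw [hu]
      positivity
    · have hu' : 0 < ‖Vinv t x‖ := lt_of_le_of_ne (norm_nonneg _) (Ne.symm hu)
      rw [le_div_iff₀ hc]
      nlinarith
  -- decomposition of the unprojected estimator
  have hXdec : (Vinv t) (∑ k ∈ Finset.Icc 1 t,
        (ContinuousLinearMap.adjoint (Mk k)) ((Mk k) αstar + w k)) - αstar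
      = Vinv t S - lamda • Vinv t αstar := by
    have h1 : (∑ k ∈ Finset.Icc 1 t,
        (ContinuousLinearMap.adjoint (Mk k)) ((Mk k) αstar + w k)) = Sop αstar + S := by
      rw [hSop, hS, ContinuousLinearMap.sum_apply, ← Finset.sum_add_distrib]
      refine Finset.sum_congr rfl fun k _ => ?_
      rw [map_add]
      rfl
    have h2 : Sop αstar = V t αstar - lamda • αstar := by
      rw [hVapp αstar]
      abel
    rw [h1, h2, map_add, map_sub, hVinvV, map_smul]
    abel
  have hmain : ‖hatα t - αstar‖ ≤ ‖Vinv t S‖ + lamda * ‖Vinv t αstar‖ := by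
    rw [hhat t]
    calc ‖projC ((Vinv t) (∑ k ∈ Finset.Icc 1 t,
            (ContinuousLinearMap.adjoint (Mk k)) ((Mk k) αstar + w k))) - αstar‖
        ≤ ‖(Vinv t) (∑ k ∈ Finset.Icc 1 t,
            (ContinuousLinearMap.adjoint (Mk k)) ((Mk k) αstar + w k)) - αstar‖ :=
          hpne _ αstar hstarC
      _ = ‖Vinv t S - lamda • Vinv t αstar‖ := by rw [hXdec]
      _ ≤ ‖Vinv t S‖ + ‖lamda • Vinv t αstar‖ := norm_sub_le _ _
      _ = ‖Vinv t S‖ + lamda * ‖Vinv t αstar‖ := by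
          rw [norm_smul, Real.norm_eq_abs, abs_of_pos hlam]
  have hterm2 : lamda * ‖Vinv t αstar‖ ≤ lamda / c * ‖αstar‖ := by
    calc lamda * ‖Vinv t αstar‖ ≤ lamda * (‖αstar‖ / c) :=
        mul_le_mul_of_nonneg_left (hinv_norm αstar) hlam.le
      _ = lamda / c * ‖αstar‖ := by ring
  -- determinant bounds
  have hlow' : ∀ v : EuclideanSpace ℝ (Fin p),
      lamda * ‖v‖ ^ 2 ≤ ⟪v, (V t).toLinearMap v⟫ := by
    intro v
    have h0 : lamda ≤ c := by rw [hcdef]; nlinarith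
    exact le_trans (mul_le_mul_of_nonneg_right h0 (sq_nonneg _)) (hlowq v)
  obtain ⟨hd1, hd2⟩ := det_bounds_aux (V t).toLinearMap hsymm lamda (lamda + (t : ℝ) * M ^ 2)
    hlam.le hlow' hupq
  have hdetpos : 0 < LinearMap.det (V t).toLinearMap :=
    lt_of_lt_of_le (pow_pos hlam p) hd1
  set b := 1 + (t : ℝ) * M ^ 2 / lamda with hbdef
  have hb1 : (1 : ℝ) ≤ b := by
    have h0 : 0 ≤ (t : ℝ) * M ^ 2 / lamda := by positivity
    rw [hbdef]
    linarith
  have hbpos : 0 < b := lt_of_lt_of_le one_pos hb1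
  set L := Real.log ((1 / delta) *
      Real.sqrt (LinearMap.det (V t).toLinearMap) / Real.sqrt (lamda ^ p)) with hLdef
  set D := Real.log ((1 / delta) * b) with hDdef
  have hdinv : (0 : ℝ) < 1 / delta := by positivity
  have hRle : (1 / delta) * Real.sqrt (LinearMap.det (V t).toLinearMap) / Real.sqrt (lamda ^ p)
      ≤ (1 / delta) * Real.sqrt (b ^ p) := by
    have hsq : Real.sqrt (LinearMap.det (V t).toLinearMap)
        ≤ Real.sqrt (lamda ^ p) * Real.sqrt (b ^ p) := by
      rw [← Real.sqrt_mul (by positivity)]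
      apply Real.sqrt_le_sqrt
      have heq : lamda ^ p * b ^ p = (lamda + (t : ℝ) * M ^ 2) ^ p := by
        rw [← mul_pow]
        congr 1
        rw [hbdef]
        field_simp
      rw [heq]
      exact hd2
    have hsp : (0 : ℝ) < Real.sqrt (lamda ^ p) := Real.sqrt_pos.mpr (by positivity)
    calc (1 / delta) * Real.sqrt (LinearMap.det (V t).toLinearMap) / Real.sqrt (lamda ^ p)
        ≤ (1 / delta) * (Real.sqrt (lamda ^ p) * Real.sqrt (b ^ p)) / Real.sqrt (lamda ^ p) := by
          gcongr
      _ = (1 / delta) * Real.sqrt (b ^ p) := by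
          field_simp
  have hRpos : 0 < (1 / delta) *
      Real.sqrt (LinearMap.det (V t).toLinearMap) / Real.sqrt (lamda ^ p) := by
    have h1 : 0 < Real.sqrt (LinearMap.det (V t).toLinearMap) := Real.sqrt_pos.mpr hdetpos
    have h2 : (0 : ℝ) < Real.sqrt (lamda ^ p) := Real.sqrt_pos.mpr (by positivity)
    positivity
  have hL_le : L ≤ Real.log (1 / delta) + (p : ℝ) / 2 * Real.log b := by
    calc L ≤ Real.log ((1 / delta) * Real.sqrt (b ^ p)) := Real.log_le_log hRpos hRle
      _ = Real.log (1 / delta) + Real.log (Real.sqrt (b ^ p)) := by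
          rw [Real.log_mul (ne_of_gt hdinv)
            (ne_of_gt (Real.sqrt_pos.mpr (by positivity)))]
      _ = Real.log (1 / delta) + (p : ℝ) / 2 * Real.log b := by
          rw [Real.log_sqrt (by positivity), Real.log_pow]
          ring
  have hD : D = Real.log (1 / delta) + Real.log b := by
    rw [hDdef, Real.log_mul (ne_of_gt hdinv) (ne_of_gt hbpos)]
  have ha_log : 0 < Real.log (1 / delta) := by
    apply Real.log_pos
    rw [lt_div_iff₀ hdel]
    linarith
  have hb_log : 0 ≤ Real.log b := Real.log_nonneg hb1
  have hp1 : (1 : ℝ) ≤ (p : ℝ) := by exact_mod_cast hp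
  have h2L3pD : 2 * L ≤ 3 * (p : ℝ) * D := by
    rw [hD]
    nlinarith [hL_le]
  -- bound on ‖Vinv t S‖
  have hq : c * ‖Vinv t S‖ ^ 2 ≤ 2 * sigma ^ 2 * L := by
    have h1 : c * ‖Vinv t S‖ ^ 2 ≤ ⟪Vinv t S, S⟫ := by
      have h2 := hlowq (Vinv t S)
      rwa [hVVinv S] at h2
    have h2 : ⟪Vinv t S, S⟫ = ⟪S, Vinv t S⟫ := real_inner_comm _ _
    have h3 := hself t ht1
    rw [← hS, ← hLdef] at h3
    linarith
  have hLnn : 0 ≤ L := by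
    have h0 : 0 ≤ 2 * sigma ^ 2 * L :=
      le_trans (mul_nonneg hc.le (sq_nonneg _)) hq
    nlinarith [mul_pos hsig hsig]
  have hDnn3 : 0 ≤ 3 * (p : ℝ) * D := le_trans (by linarith) h2L3pD
  have hu2 : ‖Vinv t S‖ ^ 2 ≤ sigma ^ 2 * (3 * (p : ℝ) * D) / c := by
    rw [le_div_iff₀ hc]
    nlinarith [sq_nonneg sigma]
  have hub : ‖Vinv t S‖ ≤ sigma / Real.sqrt c * Real.sqrt (3 * (p : ℝ) * D) := by
    have hrhs_nn : 0 ≤ sigma / Real.sqrt c * Real.sqrt (3 * (p : ℝ) * D) := by positivity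
    have hrhs_sq : (sigma / Real.sqrt c * Real.sqrt (3 * (p : ℝ) * D)) ^ 2
        = sigma ^ 2 * (3 * (p : ℝ) * D) / c := by
      rw [mul_pow, div_pow, Real.sq_sqrt hc.le, Real.sq_sqrt hDnn3]
      ring
    calc ‖Vinv t S‖ = Real.sqrt (‖Vinv t S‖ ^ 2) := (Real.sqrt_sq (norm_nonneg _)).symm
      _ ≤ Real.sqrt (sigma ^ 2 * (3 * (p : ℝ) * D) / c) := Real.sqrt_le_sqrt hu2
      _ = sigma / Real.sqrt c * Real.sqrt (3 * (p : ℝ) * D) := by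
          rw [← hrhs_sq, Real.sqrt_sq hrhs_nn]
  calc ‖hatα t - αstar‖ ≤ ‖Vinv t S‖ + lamda * ‖Vinv t αstar‖ := hmain
    _ ≤ sigma / Real.sqrt c * Real.sqrt (3 * (p : ℝ) * D) + lamda / c * ‖αstar‖ :=
        add_le_add hub hterm2
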